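/- Let V be a Grothendieck universe in Set, with generic family π : (Σ u ∈ V, u) → V given by the first projection. Then π satisfies realignment: given a monomorphism m : A ↪ B, a map f : Q → B whose fibers are V-small, and a map p : A → V together with a pullback square exhibiting m*Q as the pullback of π along p, there exists q : B → V with q ∘ m = p and a pullback square exhibiting Q as the pullback of π along q extending the given square. -/

import Mathlib

open CategoryTheory

universe u

/-- A Grothendieck universe: a transitive set closed under pairing, power sets, and
unions of families indexed by its elements. -/
structure IsGrothendieckUniverse (V : ZFSet.{u}) : Prop where
  transitive : ∀ x ∈ V, ∀ y ∈ x, y ∈ V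
  pair : ∀ x ∈ V, ∀ y ∈ V, ({x, y} : ZFSet.{u}) ∈ V
  powerset : ∀ x ∈ V, ZFSet.powerset x ∈ V
  iUnion : ∀ I ∈ V, ∀ f : ZFSet.{u} → ZFSet.{u}, (∀ i ∈ I, f i ∈ V) →
    ∃ w ∈ V, ∀ x, x ∈ w ↔ ∃ i ∈ I, x ∈ f i

/-- The type of elements of a universe `V` (codes for `V`-small sets). -/
def UElt (V : ZFSet.{u}) : Type (u + 1) := {x : ZFSet.{u} // x ∈ V}

/-- The decoding of a code `w : UElt V` as a type. -/
def UEl {V : ZFSet.{u}} (w : UElt V) : Type (u + 1) := {y : ZFSet.{u} // y ∈ w.1}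

/-- The generic family of `V`: the first projection `(Σ u ∈ V, u) → V`. -/
def genFam (V : ZFSet.{u}) : (Σ w : UElt V, UEl w) → UElt V := Sigma.fst

section Aux

variable {V : ZFSet.{u}} {A B Q : Type (u + 1)} (m : A → B) (f : Q → B)
  (hf : ∀ b : B, ∃ w : UElt V, Nonempty ({x : Q // f x = b} ≃ UEl w))
  (p : A → UElt V) (t : {x : A × Q // m x.1 = f x.2} → Σ w : UElt V, UEl w)

open Classical in
/-- The classifying map on `B`. -/
noncomputable def auxQ (b : B) : UElt V :=
  if h : ∃ a, m a = b then p h.choose else (hf b).choose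

open Classical in
/-- The fiberwise lift over a point `b : B`. -/
noncomputable def auxTb (b : B) : {x : Q // f x = b} → Σ w : UElt V, UEl w :=
  if h : ∃ a, m a = b then
    fun x => t ⟨(h.choose, x.1), h.choose_spec.trans x.2.symm⟩
  else fun x => ⟨(hf b).choose, (hf b).choose_spec.some x⟩

/-- The lift `Q → Σ w, UEl w`. -/
noncomputable def auxT (x : Q) : Σ w : UElt V, UEl w :=
  auxTb m f hf t (f x) ⟨x, rfl⟩

lemma auxT_eq (b : B) (x : Q) (hx : f x = b) :
    auxT m f hf t x = auxTb m f hf t b ⟨x, hx⟩ := by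
  subst hx; rfl

end Aux

/-- Realignment for the generic family of a Grothendieck universe `V` in `Set`:
any classifying pullback square for the restriction of a `V`-small map `f : Q → B`
along a monomorphism `m : A ↪ B` extends to a classifying pullback square for `f`. -/
theorem grothendieck_universe_realignment
    (V : ZFSet.{u}) (hV : IsGrothendieckUniverse V)
    {A B Q : Type (u + 1)} (m : A ⟶ B) (hm : Function.Injective m) (f : Q ⟶ B)
    (hf : ∀ b : B, ∃ w : UElt V, Nonempty ({x : Q // f x = b} ≃ UEl w))
    (p : A ⟶ UElt V)
    (t : ({x : A × Q // m x.1 = f x.2} : Type (u + 1)) ⟶ (Σ w : UElt V, UEl w))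
    (hsq : IsPullback t
      (TypeCat.ofHom (fun x : {x : A × Q // m x.1 = f x.2} => x.1.1) :
        ({x : A × Q // m x.1 = f x.2} : Type (u + 1)) ⟶ A)
      (TypeCat.ofHom (genFam V)) p) :
    ∃ (q : B ⟶ UElt V) (T : Q ⟶ (Σ w : UElt V, UEl w)),
      (∀ a : A, q (m a) = p a) ∧
      (∀ x : {x : A × Q // m x.1 = f x.2}, T x.1.2 = t x) ∧
      IsPullback T f (TypeCat.ofHom (genFam V)) q := by
  classical
  -- commutativity of the given square
  have hcomm : ∀ z : {x : A × Q // m x.1 = f x.2}, genFam V (t z) = p z.1.1 := by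
    intro z
    have := congrArg (fun g => g z) hsq.w
    simpa [types_comp_apply] using this
  -- bijectivity coming from the given pullback square
  have hbij := (Limits.PullbackCone.isLimitEquivBijective hsq.cone) hsq.isLimit
  have hinj_t : ∀ z z' : {x : A × Q // m x.1 = f x.2},
      t z = t z' → z.1.1 = z'.1.1 → z = z' := by
    intro z z' h1 h2
    apply hbij.1
    apply Subtype.ext
    exact Prod.ext h1 h2
  have hsurj_t : ∀ (a : A) (s : Σ w : UElt V, UEl w), genFam V s = p a →
      ∃ z : {x : A × Q // m x.1 = f x.2}, z.1.1 = a ∧ t z = s := by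
    intro a s hs
    obtain ⟨z, hz⟩ := hbij.2 ⟨(s, a), hs⟩
    have hz' := congrArg Subtype.val hz
    exact ⟨z, congrArg Prod.snd hz', congrArg Prod.fst hz'⟩
  refine ⟨TypeCat.ofHom (auxQ m f hf p), TypeCat.ofHom (auxT m f hf t), ?_, ?_, ?_⟩
  · -- q ∘ m = p
    intro a
    rw [TypeCat.ofHom_apply]
    have h : ∃ a', m a' = m a := ⟨a, rfl⟩
    have : auxQ m f hf p (m a) = p h.choose := dif_pos h
    rw [this, hm h.choose_spec]
  · -- T extends t
    intro z
    rw [TypeCat.ofHom_apply]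
    have hz : f z.1.2 = m z.1.1 := z.2.symm
    rw [auxT_eq m f hf t (m z.1.1) z.1.2 hz]
    have h : ∃ a, m a = m z.1.1 := ⟨z.1.1, rfl⟩
    have e1 : auxTb m f hf t (m z.1.1) = fun x =>
        t ⟨(h.choose, x.1), h.choose_spec.trans x.2.symm⟩ := dif_pos h
    rw [e1]
    exact congrArg t (Subtype.ext (Prod.ext (hm h.choose_spec) rfl))
  · -- the pullback square
    have comm : ∀ x : Q, genFam V (auxT m f hf t x) = auxQ m f hf p (f x) := by
      intro x
      rw [auxT_eq m f hf t (f x) x rfl]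
      by_cases h : ∃ a, m a = f x
      · rw [show auxTb m f hf t (f x) = fun y =>
            t ⟨(h.choose, y.1), h.choose_spec.trans y.2.symm⟩ from dif_pos h,
          show auxQ m f hf p (f x) = p h.choose from dif_pos h]
        exact hcomm _
      · rw [show auxTb m f hf t (f x) = fun y =>
            ⟨(hf (f x)).choose, (hf (f x)).choose_spec.some y⟩ from dif_neg h,
          show auxQ m f hf p (f x) = (hf (f x)).choose from dif_neg h]
        rfl
    have w : TypeCat.ofHom (auxT m f hf t) ≫ TypeCat.ofHom (genFam V) =
        f ≫ TypeCat.ofHom (auxQ m f hf p) := by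
      ext x; exact comm x
    apply IsPullback.of_isLimit' ⟨w⟩
    refine (Limits.PullbackCone.isLimitEquivBijective _).symm ⟨?_, ?_⟩
    · -- injectivity
      intro x x' hxx
      have hxx' := congrArg Subtype.val hxx
      have hT : auxT m f hf t x = auxT m f hf t x' := congrArg Prod.fst hxx'
      have hfx : f x = f x' := congrArg Prod.snd hxx'
      rw [auxT_eq m f hf t (f x) x rfl, auxT_eq m f hf t (f x) x' hfx.symm] at hT
      by_cases h : ∃ a, m a = f x
      · rw [show auxTb m f hf t (f x) = fun y =>
            t ⟨(h.choose, y.1), h.choose_spec.trans y.2.symm⟩ from dif_pos h] at hT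
        have := hinj_t _ _ hT rfl
        exact congrArg (fun z => z.1.2) this
      · rw [show auxTb m f hf t (f x) = fun y =>
            ⟨(hf (f x)).choose, (hf (f x)).choose_spec.some y⟩ from dif_neg h] at hT
        have h2 : HEq ((hf (f x)).choose_spec.some ⟨x, rfl⟩)
            ((hf (f x)).choose_spec.some ⟨x', hfx.symm⟩) := (Sigma.mk.inj_iff.mp hT).2
        have h3 := eq_of_heq h2
        have h4 := (hf (f x)).choose_spec.some.injective h3
        exact congrArg Subtype.val h4
    · -- surjectivity
      rintro ⟨⟨s, b⟩, hs⟩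
      simp only [Limits.PullbackCone.condition] at hs
      have hs' : genFam V s = auxQ m f hf p b := hs
      by_cases h : ∃ a, m a = b
      · have hq : auxQ m f hf p b = p h.choose := dif_pos h
        obtain ⟨z, hz1, hz2⟩ := hsurj_t h.choose s (hs'.trans hq)
        refine ⟨z.1.2, ?_⟩
        have hfz : f z.1.2 = b := by rw [← z.2, hz1, h.choose_spec]
        apply Subtype.ext
        apply Prod.ext
        · show auxT m f hf t z.1.2 = s
          rw [auxT_eq m f hf t b z.1.2 hfz,
            show auxTb m f hf t b = fun y =>
              t ⟨(h.choose, y.1), h.choose_spec.trans y.2.symm⟩ from dif_pos h]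
          have harg : (⟨(h.choose, z.1.2), h.choose_spec.trans hfz.symm⟩ :
              {x : A × Q // m x.1 = f x.2}) = z :=
            Subtype.ext (Prod.ext hz1.symm rfl)
          beta_reduce
          rw [harg]
          exact hz2
        · exact hfz
      · have hq : auxQ m f hf p b = (hf b).choose := dif_neg h
        rw [hq] at hs'
        obtain ⟨w', y⟩ := s
        have hw' : w' = (hf b).choose := hs'
        subst hw'
        set e := (hf b).choose_spec.some with he
        refine ⟨(e.symm y).1, ?_⟩
        apply Subtype.ext
        apply Prod.ext
        · show auxT m f hf t (e.symm y).1 = _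
          rw [auxT_eq m f hf t b (e.symm y).1 (e.symm y).2,
            show auxTb m f hf t b = fun x =>
              ⟨(hf b).choose, (hf b).choose_spec.some x⟩ from dif_neg h]
          exact congrArg (Sigma.mk (hf b).choose) (e.apply_symm_apply y)
        · exact (e.symm y).2
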